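/- Let {A₁,…,A_d} be a d-quadratic family and n = n(A₁,…,A_d) the associated Lie algebra. Then the center of n equals span{z₁,…,z_d} = [n,n]; i.e., n is reduced. In particular, if u = x₁v₁ + … + x_d v_d is central, then Aᵢ·(x₁,…,x_d)ᵗ = 0 for all i, which by the rank-d condition on B(A₁,…,A_d) forces u = 0. -/

import Mathlib

open Matrix

/-- A `d`-quadratic family of matrices. -/
def IsQuadraticFamily {K : Type*} [Field K] {d : ℕ}
    (A : Fin d → Matrix (Fin d) (Fin d) K) : Prop :=
  (∀ i, (A i)ᵀ = -(A i)) ∧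
  (∀ i k, A i k i = 0) ∧
  (∀ i j : Fin d, i < j → ∀ k, A i k j = -(A j k i)) ∧
  (Matrix.of fun (k : Fin d) (p : {p : Fin d × Fin d // p.1 < p.2}) =>
      A p.val.1 k p.val.2).rank = d

/-- The 2-step nilpotent bracket associated to a family of matrices, on the space with
basis `{v₁,…,v_d, z₁,…,z_d}`: `[zᵢ,·] = 0`, `[vᵢ,v_j] = Σ_k a^i_{kj} z_k`, extended
bilinearly. -/
def nBracket {K : Type*} [Field K] {d : ℕ} (A : Fin d → Matrix (Fin d) (Fin d) K)
    (p q : (Fin d → K) × (Fin d → K)) : (Fin d → K) × (Fin d → K) :=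
  (0, fun k => ∑ i, ∑ j, p.1 i * q.1 j * A i k j)

/-- The hyperbolic bilinear form with matrix `[[0, I],[I, 0]]` in the basis
`{v₁,…,v_d, z₁,…,z_d}`. -/
def hypForm {K : Type*} [Field K] {d : ℕ}
    (p q : (Fin d → K) × (Fin d → K)) : K :=
  ∑ i, (p.1 i * q.2 i + p.2 i * q.1 i)

/-- for a `d`-quadratic family, the center of `n(A₁,…,A_d)` equals
`span{z₁,…,z_d} = [n,n]`, i.e. `n` is reduced; in particular a central element
`u = Σ xᵢvᵢ` satisfies `Aᵢ·x = 0` for all `i`, which by the rank condition forces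
`u = 0`. -/
theorem stmt_13 {K : Type*} [Field K] [CharZero K] {d : ℕ}
    (A : Fin d → Matrix (Fin d) (Fin d) K) (hA : IsQuadraticFamily A) :
    -- the center is span{z₁,…,z_d} …
    {p | ∀ q, nBracket A p q = 0}
      = (Submodule.prod (⊥ : Submodule K (Fin d → K))
          (⊤ : Submodule K (Fin d → K)) : Set _) ∧
    -- … which equals the derived subalgebra: n is reduced
    Submodule.span K {x | ∃ p q, nBracket A p q = x}
      = Submodule.prod (⊥ : Submodule K (Fin d → K)) (⊤ : Submodule K (Fin d → K)) ∧
    -- in particular: a vector annihilated by all Aᵢ is zero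
    (∀ x : Fin d → K, (∀ i, (A i).mulVec x = 0) → x = 0) := by
  obtain ⟨hskew, hdiag, hlt, hrank⟩ := hA
  set B : Matrix (Fin d) {p : Fin d × Fin d // p.1 < p.2} K :=
    Matrix.of fun (k : Fin d) (p : {p : Fin d × Fin d // p.1 < p.2}) =>
      A p.val.1 k p.val.2 with hB
  -- skewness entrywise
  have hsk : ∀ i j k, A i j k = -(A i k j) := by
    intro i j k
    have := congrFun (congrFun (hskew i) k) j
    simpa [Matrix.transpose_apply] using this
  -- full antisymmetry of (i,j) ↦ A i k j
  have hanti : ∀ i j k, A i k j = -(A j k i) := by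
    intro i j k
    rcases lt_trichotomy i j with h | h | h
    · exact hlt i j h k
    · subst h; simp [hdiag]
    · have := hlt j i h k
      rw [this]; ring
  -- columns of B span everything
  have hspan : Submodule.span K (Set.range Bᵀ) = ⊤ := by
    apply Submodule.eq_top_of_finrank_eq
    rw [show Set.range Bᵀ = Set.range B.col from rfl, ← Matrix.rank_eq_finrank_span_cols, hrank, Module.finrank_fin_fun]
  -- part 3
  have key : ∀ x : Fin d → K, (∀ i, (A i).mulVec x = 0) → x = 0 := by
    intro x hx
    -- the linear functional y ↦ ∑ k, x k * y k vanishes on the columns of B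
    let f : (Fin d → K) →ₗ[K] K :=
      { toFun := fun y => ∑ k, x k * y k
        map_add' := by intro y z; simp [mul_add, Finset.sum_add_distrib]
        map_smul' := by
          intro c y
          simp only [smul_eq_mul, Pi.smul_apply, RingHom.id_apply, Finset.mul_sum]
          exact Finset.sum_congr rfl fun k _ => by ring }
    have hfcol : ∀ p : {p : Fin d × Fin d // p.1 < p.2}, f (Bᵀ p) = 0 := by
      intro p
      have h1 : ∀ k, Bᵀ p k = A p.val.1 k p.val.2 := fun k => rfl
      have h2 : (A p.val.1).mulVec x p.val.2 = 0 := by rw [hx p.val.1]; rfl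
      have : ∑ k, x k * A p.val.1 k p.val.2 = 0 := by
        have : ∑ k, A p.val.1 p.val.2 k * x k = 0 := h2
        calc ∑ k, x k * A p.val.1 k p.val.2
            = -∑ k, A p.val.1 p.val.2 k * x k := by
              rw [← Finset.sum_neg_distrib]
              apply Finset.sum_congr rfl
              intro k _
              rw [hsk p.val.1 p.val.2 k]; ring
          _ = 0 := by rw [this]; ring
      simpa [f, h1, hB] using this
    have hker : ∀ y : Fin d → K, f y = 0 := by
      intro y
      have hy : y ∈ Submodule.span K (Set.range Bᵀ) := by rw [hspan]; trivial
      have hle : Submodule.span K (Set.range Bᵀ) ≤ LinearMap.ker f := by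
        rw [Submodule.span_le]
        rintro _ ⟨p, rfl⟩
        exact hfcol p
      exact hle hy
    funext j
    have := hker (Pi.single j 1)
    simpa [f, Pi.single_apply, Finset.sum_ite_eq'] using this
  refine ⟨?_, ?_, key⟩
  · -- center = 0 × K^d
    ext p
    simp only [Set.mem_setOf_eq, SetLike.mem_coe, Submodule.mem_prod, Submodule.mem_bot,
      Submodule.mem_top, and_true]
    constructor
    · intro h
      apply key
      intro j
      funext k
      have h2 := congrFun (congrArg Prod.snd (h ((Pi.single j 1 : Fin d → K), 0))) k
      simp only [nBracket, Pi.zero_apply, Prod.snd_zero] at h2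
      have h3 : ∑ i, p.1 i * A i k j = 0 := by
        have : ∀ i : Fin d, ∑ j', p.1 i * (Pi.single j 1 : Fin d → K) j' * A i k j' = p.1 i * A i k j := by
          intro i
          rw [Finset.sum_eq_single j]
          · simp
          · intro b _ hb; simp [Pi.single_apply, hb]
          · intro hj; exact absurd (Finset.mem_univ j) hj
        rw [← h2]
        exact (Finset.sum_congr rfl fun i _ => (this i)).symm
      have : (A j).mulVec p.1 k = ∑ i, A j k i * p.1 i := rfl
      rw [this]
      calc ∑ i, A j k i * p.1 i = -∑ i, p.1 i * A i k j := by
            rw [← Finset.sum_neg_distrib]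
            apply Finset.sum_congr rfl
            intro i _
            rw [hanti i j k]; ring
        _ = 0 := by rw [h3]; ring
    · intro h q
      have hp : p.1 = 0 := h
      simp only [nBracket, hp, Pi.zero_apply, zero_mul, Finset.sum_const_zero]
      rfl
  · -- derived algebra = 0 × K^d
    apply le_antisymm
    · rw [Submodule.span_le]
      rintro _ ⟨p, q, rfl⟩
      exact ⟨rfl, trivial⟩
    · rintro ⟨a, z⟩ ⟨ha, -⟩
      simp only [Submodule.mem_bot] at ha
      subst ha
      let g : (Fin d → K) →ₗ[K] ((Fin d → K) × (Fin d → K)) :=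
        LinearMap.prod 0 LinearMap.id
      have hcol : ∀ p : {p : Fin d × Fin d // p.1 < p.2},
          g (Bᵀ p) ∈ Submodule.span K {x | ∃ p q, nBracket A p q = x} := by
        intro p
        apply Submodule.subset_span
        refine ⟨((Pi.single p.val.1 1 : Fin d → K), 0), ((Pi.single p.val.2 1 : Fin d → K), 0), ?_⟩
        have : (fun k => ∑ i, ∑ j, (Pi.single p.val.1 1 : Fin d → K) i * (Pi.single p.val.2 1 : Fin d → K) j * A i k j)
            = fun k => A p.val.1 k p.val.2 := by
          funext k
          rw [Finset.sum_eq_single p.val.1]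
          · rw [Finset.sum_eq_single p.val.2]
            · simp
            · intro b _ hb; simp [Pi.single_apply, hb]
            · intro hj; exact absurd (Finset.mem_univ _) hj
          · intro b _ hb
            apply Finset.sum_eq_zero
            intro c _
            simp [Pi.single_apply, hb]
          · intro hj; exact absurd (Finset.mem_univ _) hj
        simp only [nBracket, this]
        rfl
      have hle : Submodule.span K (Set.range Bᵀ)
          ≤ (Submodule.span K {x | ∃ p q, nBracket A p q = x}).comap g := by
        rw [Submodule.span_le]
        rintro _ ⟨p, rfl⟩
        exact hcol p
      have hz : z ∈ Submodule.span K (Set.range Bᵀ) := by rw [hspan]; trivial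
      have := hle hz
      simpa [g, Submodule.mem_comap] using this
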